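/- If w is a reduced word over {a,b,c,d} of length |w| > 1 representing an element of the level-1 stabilizer G₁ of the Grigorchuk group, then the lengths of the images |φ_L(w)| and |φ_R(w)| (as words) satisfy |φ_i(w)| < ½|w| + 1. -/
import Mathlib


/-- The alphabet `{a, b, c, d}` of generators of the Grigorchuk group. -/
inductive Glet : Type
  | a | b | c | d
deriving DecidableEq

/-- A word is reduced if it contains none of
`aa, bb, cc, dd, bc, cb, bd, db, cd, dc` as a factor. -/
def GrigReduced (w : List Glet) : Prop :=
  ∀ (u v : List Glet) (x y : Glet), w = u ++ [x, y] ++ v →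
    ¬(x = y ∨ (x ≠ Glet.a ∧ y ≠ Glet.a))

/-- The word-level left section map `φ_L`, defined on the generators of `G₁` by
`b ↦ a`, `c ↦ a`, `d ↦ 1`, `aba ↦ c`, `aca ↦ d`, `ada ↦ b`. -/
def phiL : List Glet → List Glet
  | [] => []
  | .b :: s => .a :: phiL s
  | .c :: s => .a :: phiL s
  | .d :: s => phiL s
  | .a :: .b :: .a :: s => .c :: phiL s
  | .a :: .c :: .a :: s => .d :: phiL s
  | .a :: .d :: .a :: s => .b :: phiL s
  | .a :: s => phiL s

/-- The word-level right section map `φ_R`, defined on the generators of `G₁` by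
`b ↦ c`, `c ↦ d`, `d ↦ b`, `aba ↦ a`, `aca ↦ a`, `ada ↦ 1`. -/
def phiR : List Glet → List Glet
  | [] => []
  | .b :: s => .c :: phiR s
  | .c :: s => .d :: phiR s
  | .d :: s => .b :: phiR s
  | .a :: .b :: .a :: s => .a :: phiR s
  | .a :: .c :: .a :: s => .a :: phiR s
  | .a :: .d :: .a :: s => phiR s
  | .a :: s => phiR s

lemma red_tail {x : Glet} {t : List Glet} (h : GrigReduced (x :: t)) :
    GrigReduced t := by
  intro u v p q he
  exact h (x :: u) v p q (by simp [he])

lemma red_head {x y : Glet} {t : List Glet} (h : GrigReduced (x :: y :: t)) :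
    ¬(x = y ∨ (x ≠ Glet.a ∧ y ≠ Glet.a)) := h [] t x y rfl

lemma phiL_len (w : List Glet) :
    (phiL w).length + w.count Glet.a ≤ w.length := by
  induction w using phiL.induct <;> simp_all [phiL, List.count_cons] <;> omega

lemma phiR_len (w : List Glet) :
    (phiR w).length + w.count Glet.a ≤ w.length := by
  induction w using phiR.induct <;> simp_all [phiR, List.count_cons] <;> omega

lemma red_len (w : List Glet) (h : GrigReduced w) :
    w.length ≤ 2 * w.count Glet.a + 1 ∧
      (∀ t, w = Glet.a :: t → w.length ≤ 2 * w.count Glet.a) := by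
  induction w with
  | nil => simp
  | cons x t ih =>
    have ht := ih (red_tail h)
    rcases x with _ | _ | _ | _
    · have h1 := ht.1
      constructor
      · simp [List.count_cons]; omega
      · intro t' he; simp [List.count_cons]; omega
    all_goals {
      refine ⟨?_, by intro t' he; simp at he⟩
      rcases t with _ | ⟨y, s⟩
      · simp
      · have hy : y = Glet.a := by
          have := red_head h
          rcases y with _ | _ | _ | _ <;> simp_all
        subst hy
        have h2 := ht.2 s rfl
        simp [List.count_cons] at h2 ⊢
        omega }

/-- if `w` is a reduced word over `{a,b,c,d}` of length `> 1`
representing an element of the level-1 stabiliser `G₁` (i.e. with an even number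
of occurrences of `a`), then `|φ_L(w)| < ½|w| + 1` and `|φ_R(w)| < ½|w| + 1`. -/
theorem stmt_8 (w : List Glet) (hred : GrigReduced w)
    (hG1 : Even (w.count Glet.a)) (hlen : 1 < w.length) :
    ((phiL w).length : ℝ) < (w.length : ℝ) / 2 + 1 ∧
    ((phiR w).length : ℝ) < (w.length : ℝ) / 2 + 1 := by
  have h1 := phiL_len w
  have h2 := phiR_len w
  have h3 := (red_len w hred).1
  have hL : 2 * (phiL w).length ≤ w.length + 1 := by omega
  have hR : 2 * (phiR w).length ≤ w.length + 1 := by omega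
  constructor
  · have : (2:ℝ) * (phiL w).length ≤ w.length + 1 := by exact_mod_cast hL
    linarith
  · have : (2:ℝ) * (phiR w).length ≤ w.length + 1 := by exact_mod_cast hR
    linarith
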